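/- Fix s > 0, b ∈ ℝ, γ = 0 and μ = 1. Then (λ_ε + (1 + √5)/2 + i ε b/√5)/ε² → −(s/√5 + b²/(5√5)) as ε → 0⁺. -/

import Mathlib

open Filter

lemma alg14 (Lc r e S B : ℂ) (h : Lc * (Lc - r) = e ^ 2 * S + Complex.I * e * B)
    (he : e ≠ 0) (hd : Lc - r ≠ 0) (hr : r ≠ 0) :
    (Lc + Complex.I * e * B / r) / e ^ 2
      = (r * S * (Lc - r) + Complex.I * B * (e * S + Complex.I * B)) / (r * (Lc - r) ^ 2) := by
  have he2 : (e:ℂ)^2 ≠ 0 := pow_ne_zero _ he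
  have hre : r * e ^ 2 ≠ 0 := mul_ne_zero hr he2
  have hden : r * (Lc - r) ^ 2 ≠ 0 := mul_ne_zero hr (pow_ne_zero _ hd)
  have hL : Lc + Complex.I * e * B / r = (r * Lc + Complex.I * e * B) / r := by
    field_simp
  rw [hL, div_div, div_eq_div_iff hre hden]
  linear_combination (r^2*(Lc - r) + r*Complex.I*e*B) * h

theorem stmt14 (s b γ μ : ℝ) (hs : 0 < s) (hγ : γ = 0) (hμ : μ = 1)
    (lam : ℝ → ℂ)
    (hlam : ∀ ε : ℝ, 0 < ε →
      lam ε ^ 2 + ((ε ^ γ : ℝ) : ℂ) * lam ε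
          - (((ε ^ (1 + μ) : ℝ) : ℂ) * (s : ℂ) + Complex.I * (ε : ℂ) * (b : ℂ) + 1) = 0 ∧
        (lam ε).re < 0) :
    Tendsto (fun ε : ℝ =>
        (lam ε + (((1 + Real.sqrt 5) / 2 : ℝ) : ℂ)
            + Complex.I * (ε : ℂ) * (b : ℂ) / ((Real.sqrt 5 : ℝ) : ℂ)) / (ε : ℂ) ^ 2)
      (nhdsWithin 0 (Set.Ioi 0))
      (nhds (((-(s / Real.sqrt 5 + b ^ 2 / (5 * Real.sqrt 5)) : ℝ)) : ℂ)) := by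
  subst hγ hμ
  set r5 : ℝ := Real.sqrt 5 with hr5def
  have hr5sq : r5 ^ 2 = 5 := Real.sq_sqrt (by norm_num)
  have hr5gt : (2:ℝ) < r5 := by nlinarith [Real.sqrt_nonneg (5:ℝ)]
  have hr5ne : ((r5:ℝ):ℂ) ≠ 0 := by
    simpa using Complex.ofReal_ne_zero.mpr (by positivity : r5 ≠ 0)
  set φ : ℂ := (((1 + r5) / 2 : ℝ) : ℂ) with hφdef
  -- the product identity
  have hprod : ∀ ε : ℝ, 0 < ε →
      (lam ε + φ) * ((lam ε + φ) - (r5:ℂ)) = (ε:ℂ) ^ 2 * s + Complex.I * ε * b := by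
    intro ε hε
    obtain ⟨h0, -⟩ := hlam ε hε
    rw [show (ε:ℝ) ^ (0:ℝ) = 1 from Real.rpow_zero ε,
        show (ε:ℝ) ^ (1+1:ℝ) = ε ^ 2 by
          rw [show (1+1:ℝ) = ((2:ℕ):ℝ) by norm_num, Real.rpow_natCast]] at h0
    have hc5 : ((r5:ℝ):ℂ) ^ 2 = 5 := by
      rw [← Complex.ofReal_pow, hr5sq]; norm_num
    simp only [hφdef]
    push_cast at h0 ⊢
    linear_combination h0 - (1/4 : ℂ) * hc5
  -- lower bound on the second factor
  have hDlb : ∀ ε : ℝ, 0 < ε → (r5 - 1) / 2 ≤ ‖(lam ε + φ) - (r5:ℂ)‖ := by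
    intro ε hε
    obtain ⟨-, hre⟩ := hlam ε hε
    have h1 : ((lam ε + φ) - (r5:ℂ)).re = (lam ε).re + (1 + r5)/2 - r5 := by
      simp [hφdef, Complex.add_re, Complex.sub_re]
    have h2 : |((lam ε + φ) - (r5:ℂ)).re| ≤ ‖(lam ε + φ) - (r5:ℂ)‖ := Complex.abs_re_le_norm _
    rw [h1] at h2
    have h3 : (r5 - 1) / 2 ≤ -((lam ε).re + (1 + r5)/2 - r5) := by linarith
    have h4 : -((lam ε).re + (1 + r5)/2 - r5) ≤ |(lam ε).re + (1 + r5)/2 - r5| :=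
      neg_le_abs _
    linarith
  -- lam ε + φ → 0
  have hLφ : Tendsto (fun ε : ℝ => lam ε + φ) (nhdsWithin 0 (Set.Ioi 0)) (nhds 0) := by
    have hbound : ∀ᶠ ε in nhdsWithin (0:ℝ) (Set.Ioi 0),
        ‖lam ε + φ‖ ≤ 2 * (ε ^ 2 * s + ε * |b|) := by
      filter_upwards [self_mem_nhdsWithin] with ε (hε : 0 < ε)
      have h1 := hprod ε hε
      have h2 := hDlb ε hε
      have h3 : ‖lam ε + φ‖ * ‖(lam ε + φ) - (r5:ℂ)‖ = ‖(ε:ℂ) ^ 2 * s + Complex.I * ε * b‖ := by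
        rw [← norm_mul, h1]
      have h4 : ‖(ε:ℂ) ^ 2 * s + Complex.I * ε * b‖ ≤ ε ^ 2 * s + ε * |b| := by
        calc ‖(ε:ℂ) ^ 2 * s + Complex.I * ε * b‖
            ≤ ‖(ε:ℂ) ^ 2 * (s:ℂ)‖ + ‖Complex.I * ε * b‖ := norm_add_le _ _
          _ = ε ^ 2 * s + ε * |b| := by
              rw [norm_mul, norm_mul, norm_mul]
              simp [Complex.norm_real, abs_of_pos hε, abs_of_pos hs,
                abs_of_pos (pow_pos hε 2), Real.norm_eq_abs]
      nlinarith [norm_nonneg (lam ε + φ), norm_nonneg ((lam ε + φ) - (r5:ℂ))]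
    have hg0 : Tendsto (fun ε : ℝ => 2 * (ε ^ 2 * s + ε * |b|))
        (nhdsWithin 0 (Set.Ioi 0)) (nhds 0) := by
      have : Continuous (fun ε : ℝ => 2 * (ε ^ 2 * s + ε * |b|)) := by continuity
      have h := this.tendsto 0
      simp only [ne_eq, zero_pow, mul_zero, zero_mul, add_zero, mul_zero] at h
      simpa using h.mono_left nhdsWithin_le_nhds
    exact squeeze_zero_norm' hbound hg0
  -- D → -r5
  have hD : Tendsto (fun ε : ℝ => (lam ε + φ) - (r5:ℂ)) (nhdsWithin 0 (Set.Ioi 0))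
      (nhds (-(r5:ℂ))) := by
    have := hLφ.sub (tendsto_const_nhds (x := ((r5:ℝ):ℂ)))
    simpa using this
  -- ε → 0 (as complex)
  have hε0 : Tendsto (fun ε : ℝ => (ε:ℂ)) (nhdsWithin 0 (Set.Ioi 0)) (nhds 0) := by
    have := Complex.continuous_ofReal.tendsto 0
    simpa using this.mono_left nhdsWithin_le_nhds
  -- limit of g
  have hgtend : Tendsto (fun ε : ℝ =>
      ((r5:ℂ) * s * ((lam ε + φ) - (r5:ℂ)) + Complex.I * b * ((ε:ℂ) * s + Complex.I * b))
        / ((r5:ℂ) * ((lam ε + φ) - (r5:ℂ)) ^ 2))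
      (nhdsWithin 0 (Set.Ioi 0))
      (nhds (((-(s / r5 + b ^ 2 / (5 * r5)) : ℝ)) : ℂ)) := by
    have hnum : Tendsto (fun ε : ℝ =>
        (r5:ℂ) * s * ((lam ε + φ) - (r5:ℂ)) + Complex.I * b * ((ε:ℂ) * s + Complex.I * b))
        (nhdsWithin 0 (Set.Ioi 0))
        (nhds ((r5:ℂ) * s * (-(r5:ℂ)) + Complex.I * b * ((0:ℂ) * s + Complex.I * b))) :=
      ((tendsto_const_nhds.mul hD)).add
        (tendsto_const_nhds.mul ((hε0.mul tendsto_const_nhds).add tendsto_const_nhds))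
    have hden : Tendsto (fun ε : ℝ => (r5:ℂ) * ((lam ε + φ) - (r5:ℂ)) ^ 2)
        (nhdsWithin 0 (Set.Ioi 0)) (nhds ((r5:ℂ) * (-(r5:ℂ)) ^ 2)) :=
      tendsto_const_nhds.mul (hD.pow 2)
    have hdne : (r5:ℂ) * (-(r5:ℂ)) ^ 2 ≠ 0 := by
      apply mul_ne_zero hr5ne
      apply pow_ne_zero
      simpa using hr5ne
    have := hnum.div hden hdne
    convert this using 2
    · rfl
    have hc5 : ((r5:ℝ):ℂ) ^ 2 = 5 := by
      rw [← Complex.ofReal_pow, hr5sq]; norm_num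
    have hr5ne' : (r5:ℝ) ≠ 0 := by positivity
    rw [eq_div_iff hdne]
    push_cast
    field_simp
    linear_combination (-(b:ℂ)^2) * hc5 - ((5:ℂ)*(b:ℂ)^2) * Complex.I_sq
  -- conclude via eventual equality
  apply hgtend.congr'
  filter_upwards [self_mem_nhdsWithin] with ε (hε : 0 < ε)
  have hεne : ((ε:ℝ):ℂ) ≠ 0 := Complex.ofReal_ne_zero.mpr (ne_of_gt hε)
  have hdne : (lam ε + φ) - (r5:ℂ) ≠ 0 := by
    intro h
    have := hDlb ε hε
    rw [h, norm_zero] at this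
    linarith
  have := alg14 (lam ε + φ) (r5:ℂ) (ε:ℂ) (s:ℂ) (b:ℂ) (hprod ε hε) hεne hdne hr5ne
  exact this.symm
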